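/- Let n ≥ 2, let J ∈ ℝ^{n×n} be symmetric (Jᵀ = J), let λ ∈ ℝ be a simple eigenvalue of J (a root of the characteristic polynomial of J of multiplicity exactly one) with eigenvector v ≠ 0, Jv = λv, and let V ∈ ℝ^{n×(n−1)} have orthonormal columns (VᵀV = I_{n−1}) that are orthogonal to v (Vᵀv = 0). Then the spectral norm of Z = V (Vᵀ(J − λI)V)⁻¹ Vᵀ equals the reciprocal of the spectral gap of λ: ‖Z‖₂ = 1 / min{ |μ − λ| : μ is an eigenvalue of J with μ ≠ λ }. -/

import Mathlib

open Matrix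

/-- Euclidean norm of a vector in `ℝⁿ`. -/
noncomputable def e2norm {n : ℕ} (v : Fin n → ℝ) : ℝ := Real.sqrt (∑ i, v i ^ 2)

/-- Frobenius norm of a real matrix. -/
noncomputable def frobNorm {n m : ℕ} (M : Matrix (Fin n) (Fin m) ℝ) : ℝ :=
  Real.sqrt (∑ i, ∑ j, M i j ^ 2)

/-- Spectral norm: the supremum of `‖M x‖` over Euclidean-unit vectors `x`. -/
noncomputable def specNorm {n m : ℕ} (M : Matrix (Fin n) (Fin m) ℝ) : ℝ :=
  sSup ((fun x => e2norm (M.mulVec x)) '' {x : Fin m → ℝ | e2norm x = 1})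

lemma e2norm_eq_sqrt_dot {n : ℕ} (x : Fin n → ℝ) : e2norm x = Real.sqrt (x ⬝ᵥ x) := by
  simp [e2norm, dotProduct, sq]

lemma dot_self_nonneg {n : ℕ} (x : Fin n → ℝ) : 0 ≤ x ⬝ᵥ x :=
  Finset.sum_nonneg fun i _ => mul_self_nonneg _

lemma e2norm_nonneg {n : ℕ} (x : Fin n → ℝ) : 0 ≤ e2norm x := Real.sqrt_nonneg _

lemma e2norm_sq {n : ℕ} (x : Fin n → ℝ) : e2norm x ^ 2 = x ⬝ᵥ x := by
  rw [e2norm_eq_sqrt_dot, Real.sq_sqrt (dot_self_nonneg x)]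

lemma e2norm_smul {n : ℕ} (c : ℝ) (x : Fin n → ℝ) : e2norm (c • x) = |c| * e2norm x := by
  simp only [e2norm, Pi.smul_apply, smul_eq_mul, mul_pow, ← Finset.mul_sum]
  rw [Real.sqrt_mul (sq_nonneg c), Real.sqrt_sq_eq_abs]

lemma dot_le_e2norm_mul {n : ℕ} (x y : Fin n → ℝ) : x ⬝ᵥ y ≤ e2norm x * e2norm y := by
  have h := Finset.sum_mul_sq_le_sq_mul_sq Finset.univ x y
  calc x ⬝ᵥ y ≤ |x ⬝ᵥ y| := le_abs_self _
    _ = Real.sqrt ((x ⬝ᵥ y) ^ 2) := (Real.sqrt_sq_eq_abs _).symm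
    _ ≤ Real.sqrt ((∑ i, x i ^ 2) * ∑ i, y i ^ 2) := Real.sqrt_le_sqrt (by
          simpa [dotProduct] using h)
    _ = e2norm x * e2norm y := by
        rw [Real.sqrt_mul (Finset.sum_nonneg fun i _ => sq_nonneg _)]; rfl

lemma e2norm_mulVec_of_orthonormal {n k : ℕ} (B : Matrix (Fin n) (Fin k) ℝ)
    (hB : Bᵀ * B = 1) (y : Fin k → ℝ) : e2norm (B.mulVec y) = e2norm y := by
  rw [e2norm_eq_sqrt_dot, e2norm_eq_sqrt_dot]
  congr 1
  calc B.mulVec y ⬝ᵥ B.mulVec y = (B.mulVec y ᵥ* B) ⬝ᵥ y := dotProduct_mulVec _ _ _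
    _ = (Bᵀ.mulVec (B.mulVec y)) ⬝ᵥ y := by rw [mulVec_transpose]
    _ = ((Bᵀ * B).mulVec y) ⬝ᵥ y := by rw [mulVec_mulVec]
    _ = y ⬝ᵥ y := by rw [hB, one_mulVec]

lemma e2norm_transpose_mulVec_le {n k : ℕ} (B : Matrix (Fin n) (Fin k) ℝ)
    (hB : Bᵀ * B = 1) (x : Fin n → ℝ) : e2norm (Bᵀ.mulVec x) ≤ e2norm x := by
  set y := Bᵀ.mulVec x with hy
  have h1 : y ⬝ᵥ y ≤ e2norm y * e2norm x := by
    calc y ⬝ᵥ y = (B.mulVec y) ⬝ᵥ x := by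
          rw [hy, dotProduct_comm, dotProduct_mulVec, ← mulVec_transpose, transpose_transpose]
      _ ≤ e2norm (B.mulVec y) * e2norm x := dot_le_e2norm_mul _ _
      _ = e2norm y * e2norm x := by rw [e2norm_mulVec_of_orthonormal B hB]
  rcases eq_or_lt_of_le (e2norm_nonneg y) with h0 | h0
  · rw [← h0]; exact e2norm_nonneg x
  · have := (e2norm_sq y) ▸ h1
    nlinarith [e2norm_sq y]

lemma e2norm_diagonal_mulVec_le {k : ℕ} (d : Fin k → ℝ) (c : ℝ) (hc0 : 0 ≤ c)
    (hc : ∀ i, |d i| ≤ c) (y : Fin k → ℝ) :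
    e2norm ((diagonal d).mulVec y) ≤ c * e2norm y := by
  have : ∀ i, ((diagonal d).mulVec y) i = d i * y i := fun i => mulVec_diagonal d y i
  have hle : ∑ i, ((diagonal d).mulVec y) i ^ 2 ≤ c ^ 2 * ∑ i, y i ^ 2 := by
    rw [Finset.mul_sum]
    refine Finset.sum_le_sum fun i _ => ?_
    rw [this i, mul_pow]
    have : d i ^ 2 ≤ c ^ 2 := by
      have := hc i; nlinarith [abs_nonneg (d i), sq_abs (d i)]
    nlinarith [sq_nonneg (y i)]
  calc e2norm ((diagonal d).mulVec y) = Real.sqrt (∑ i, ((diagonal d).mulVec y) i ^ 2) := rfl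
    _ ≤ Real.sqrt (c ^ 2 * ∑ i, y i ^ 2) := Real.sqrt_le_sqrt hle
    _ = c * e2norm y := by
        rw [Real.sqrt_mul (sq_nonneg c), Real.sqrt_sq hc0]; rfl

lemma e2norm_single {k : ℕ} (i : Fin k) : e2norm (Pi.single i (1:ℝ)) = 1 := by
  have h : ∑ j : Fin k, (Pi.single i (1:ℝ) : Fin k → ℝ) j ^ 2 = 1 := by
    rw [Finset.sum_eq_single i]
    · simp
    · intro b _ hb; simp [Pi.single_apply, hb]
    · simp
  simp only [e2norm, h, Real.sqrt_one]

lemma specNorm_BDBt {n k : ℕ} (hk : (Finset.univ : Finset (Fin k)).Nonempty)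
    (B : Matrix (Fin n) (Fin k) ℝ) (hB : Bᵀ * B = 1) (d : Fin k → ℝ) :
    specNorm (B * diagonal d * Bᵀ) = Finset.univ.sup' hk fun i => |d i| := by
  have hcle : ∀ i, |d i| ≤ Finset.univ.sup' hk fun j => |d j| := fun i =>
    Finset.le_sup' (fun j => |d j|) (Finset.mem_univ i)
  have hc0 : 0 ≤ Finset.univ.sup' hk fun j => |d j| :=
    le_trans (abs_nonneg (d hk.choose)) (hcle hk.choose)
  apply IsGreatest.csSup_eq
  constructor
  · obtain ⟨i₀, -, hi₀⟩ := Finset.exists_mem_eq_sup' hk fun i => |d i|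
    have e0 : Bᵀ.mulVec (B.mulVec (Pi.single i₀ (1:ℝ))) = Pi.single i₀ (1:ℝ) := by
      rw [mulVec_mulVec, hB, one_mulVec]
    refine ⟨B.mulVec (Pi.single i₀ (1:ℝ)), ?_, ?_⟩
    · show e2norm _ = 1
      rw [e2norm_mulVec_of_orthonormal B hB, e2norm_single]
    · show e2norm ((B * diagonal d * Bᵀ).mulVec (B.mulVec (Pi.single i₀ (1:ℝ))))
        = Finset.univ.sup' hk fun i => |d i|
      have h1 : (B * diagonal d * Bᵀ).mulVec (B.mulVec (Pi.single i₀ (1:ℝ)))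
          = B.mulVec ((diagonal d).mulVec (Pi.single i₀ (1:ℝ))) := by
        rw [← mulVec_mulVec, ← mulVec_mulVec, e0]
      rw [h1]
      have h2 : (diagonal d).mulVec (Pi.single i₀ (1:ℝ)) = d i₀ • (Pi.single i₀ (1:ℝ) : Fin k → ℝ) := by
        funext j
        rw [mulVec_diagonal]
        by_cases h : j = i₀
        · subst h; simp
        · simp [Pi.single_apply, h]
      rw [h2, mulVec_smul, e2norm_smul, e2norm_mulVec_of_orthonormal B hB, e2norm_single,
        mul_one, hi₀]
  · rintro r ⟨x, hx, rfl⟩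
    have hx1 : e2norm x = 1 := hx
    show e2norm ((B * diagonal d * Bᵀ).mulVec x) ≤ Finset.univ.sup' hk fun i => |d i|
    have h1 : (B * diagonal d * Bᵀ).mulVec x
        = B.mulVec ((diagonal d).mulVec (Bᵀ.mulVec x)) := by
      rw [← mulVec_mulVec, ← mulVec_mulVec]
    rw [h1, e2norm_mulVec_of_orthonormal B hB]
    calc e2norm ((diagonal d).mulVec (Bᵀ.mulVec x))
        ≤ (Finset.univ.sup' hk fun j => |d j|) * e2norm (Bᵀ.mulVec x) :=
          e2norm_diagonal_mulVec_le d _ hc0 hcle _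
      _ ≤ (Finset.univ.sup' hk fun j => |d j|) * e2norm x :=
          mul_le_mul_of_nonneg_left (e2norm_transpose_mulVec_le B hB x) hc0
      _ = Finset.univ.sup' hk fun j => |d j| := by rw [hx1, mul_one]

open Polynomial in
lemma my_charpoly_eval {k : Type*} [Fintype k] [DecidableEq k]
    (M : Matrix k k ℝ) (t : ℝ) : M.charpoly.eval t = (t • (1 : Matrix k k ℝ) - M).det := by
  rw [Matrix.charpoly, eval_det, matPolyEquiv_charmatrix, eval_sub, eval_X, eval_C]
  congr 1
  rw [scalar_apply, smul_one_eq_diagonal]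

section spec
variable {k : Type*} [Fintype k] [DecidableEq k]

lemma coe_star_eigen {A : Matrix k k ℝ} (hA : A.IsHermitian) :
    (star hA.eigenvectorUnitary : Matrix k k ℝ) = (hA.eigenvectorUnitary : Matrix k k ℝ)ᵀ := by
  rw [Matrix.star_eq_conjTranspose]
  ext i j; simp [conjTranspose_apply]

lemma my_spectral {A : Matrix k k ℝ} (hA : A.IsHermitian) :
    A = (hA.eigenvectorUnitary : Matrix k k ℝ) * diagonal hA.eigenvalues *
      (hA.eigenvectorUnitary : Matrix k k ℝ)ᵀ := by
  have h := hA.spectral_theorem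
  have h2 : (RCLike.ofReal ∘ hA.eigenvalues : k → ℝ) = hA.eigenvalues := by
    funext i; simp
  rwa [Unitary.conjStarAlgAut_apply, h2, coe_star_eigen hA] at h

lemma my_unitary1 {A : Matrix k k ℝ} (hA : A.IsHermitian) :
    (hA.eigenvectorUnitary : Matrix k k ℝ)ᵀ * (hA.eigenvectorUnitary : Matrix k k ℝ) = 1 := by
  have h := Unitary.coe_star_mul_self hA.eigenvectorUnitary
  rwa [coe_star_eigen hA] at h

lemma my_unitary2 {A : Matrix k k ℝ} (hA : A.IsHermitian) :
    (hA.eigenvectorUnitary : Matrix k k ℝ) * (hA.eigenvectorUnitary : Matrix k k ℝ)ᵀ = 1 := by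
  have h := Unitary.coe_mul_star_self hA.eigenvectorUnitary
  rw [Unitary.coe_star] at h
  rwa [coe_star_eigen hA] at h
end spec

open Polynomial in
lemma key_det {n : ℕ} (hn : 2 ≤ n) (J : Matrix (Fin n) (Fin n) ℝ) (hJ : Jᵀ = J) (lam : ℝ)
    (u : Fin n → ℝ) (huu : u ⬝ᵥ u = 1) (hJu : J.mulVec u = lam • u)
    (V : Matrix (Fin n) (Fin (n-1)) ℝ) (hVV : Vᵀ * V = 1) (hVu : Vᵀ.mulVec u = 0) (t : ℝ) :
    (t • (1 : Matrix (Fin n) (Fin n) ℝ) - J).det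
      = (t - lam) * ((t - lam) • (1 : Matrix (Fin (n-1)) (Fin (n-1)) ℝ) - (Vᵀ * J * V - lam • 1)).det := by
  set U : Matrix (Fin n) (Fin 1) ℝ := Matrix.of fun i _ => u i with hU
  have hUU : Uᵀ * U = 1 := by
    ext i j
    have : i = j := Subsingleton.elim i j
    subst this
    rw [Matrix.one_apply_eq]
    simpa [Matrix.mul_apply, dotProduct, hU] using huu
  have hUV : Uᵀ * V = 0 := by
    ext i j
    have h := congrFun hVu j
    simp only [Matrix.mulVec, dotProduct, transpose_apply, Pi.zero_apply] at h
    simp only [Matrix.mul_apply, transpose_apply, Matrix.of_apply, Matrix.zero_apply, hU]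
    rw [← h]
    exact Finset.sum_congr rfl fun k _ => mul_comm _ _
  have hVU : Vᵀ * U = 0 := by
    have h : Vᵀ * U = (Uᵀ * V)ᵀ := by rw [transpose_mul, transpose_transpose]
    rw [h, hUV, transpose_zero]
  have hJU : J * U = lam • U := by
    ext i j
    have h := congrFun hJu i
    simp only [Matrix.mulVec, dotProduct] at h
    simpa [Matrix.mul_apply, hU] using h
  have hUJ : Uᵀ * J = lam • Uᵀ := by
    have h := congrArg Matrix.transpose hJU
    rwa [transpose_mul, hJ, transpose_smul] at h
  set W : Matrix (Fin n) (Fin 1 ⊕ Fin (n-1)) ℝ := fromCols U V with hW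
  have hWW : Wᵀ * W = 1 := by
    rw [hW, transpose_fromCols, fromRows_mul_fromCols, hUU, hUV, hVU, hVV, fromBlocks_one]
  set M : Matrix (Fin n) (Fin n) ℝ := t • 1 - J with hM
  have hMU : M * U = (t - lam) • U := by
    rw [hM, Matrix.sub_mul, Matrix.smul_mul, Matrix.one_mul, hJU, ← sub_smul]
  have hb12 : Uᵀ * (M * V) = 0 := by
    rw [hM, Matrix.sub_mul, Matrix.smul_mul, Matrix.one_mul, Matrix.mul_sub, Matrix.mul_smul,
      hUV, ← Matrix.mul_assoc, hUJ, Matrix.smul_mul, hUV, smul_zero, smul_zero, sub_zero]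
  have hb22 : Vᵀ * (M * V) =
      (t - lam) • (1 : Matrix (Fin (n-1)) (Fin (n-1)) ℝ) - (Vᵀ * J * V - lam • 1) := by
    rw [hM, Matrix.sub_mul, Matrix.smul_mul, Matrix.one_mul, Matrix.mul_sub, Matrix.mul_smul,
      hVV, ← Matrix.mul_assoc, sub_smul]
    abel
  have hblock : Wᵀ * (M * W) =
      fromBlocks ((t - lam) • (1 : Matrix (Fin 1) (Fin 1) ℝ)) 0 0
        ((t - lam) • (1 : Matrix (Fin (n-1)) (Fin (n-1)) ℝ) - (Vᵀ * J * V - lam • 1)) := by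
    rw [hW, transpose_fromCols, mul_fromCols, fromRows_mul_fromCols, hMU,
      Matrix.mul_smul, hUU, hb12, Matrix.mul_smul, hVU, smul_zero, hb22]
  have hn1 : n = 1 + (n - 1) := by omega
  set e : Fin n ≃ Fin 1 ⊕ Fin (n-1) := (finCongr hn1).trans finSumFinEquiv.symm with he
  set W' : Matrix (Fin n) (Fin n) ℝ := W.submatrix id ⇑e with hW'
  have hW'1 : W'ᵀ * W' = 1 := by
    calc W'ᵀ * W' = Wᵀ.submatrix ⇑e ⇑(Equiv.refl (Fin n)) * W.submatrix ⇑(Equiv.refl (Fin n)) ⇑e := by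
          rw [hW', transpose_submatrix, Equiv.coe_refl]
      _ = (Wᵀ * W).submatrix ⇑e ⇑e := submatrix_mul_equiv _ _ _ _ _
      _ = 1 := by rw [hWW, submatrix_one_equiv]
  have hMW : M * W' = (M * W).submatrix ⇑(Equiv.refl (Fin n)) ⇑e := by
    calc M * W' = M.submatrix ⇑(Equiv.refl (Fin n)) ⇑(Equiv.refl (Fin n))
          * W.submatrix ⇑(Equiv.refl (Fin n)) ⇑e := by
          rw [hW', Equiv.coe_refl, submatrix_id_id]
      _ = (M * W).submatrix ⇑(Equiv.refl (Fin n)) ⇑e := submatrix_mul_equiv _ _ _ _ _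
  have h6 : W'ᵀ * (M * W') = (Wᵀ * (M * W)).submatrix ⇑e ⇑e := by
    calc W'ᵀ * (M * W') = Wᵀ.submatrix ⇑e ⇑(Equiv.refl (Fin n))
          * (M * W).submatrix ⇑(Equiv.refl (Fin n)) ⇑e := by
          rw [hMW, hW', transpose_submatrix, Equiv.coe_refl]
      _ = (Wᵀ * (M * W)).submatrix ⇑e ⇑e := submatrix_mul_equiv _ _ _ _ _
  have h5 : M.det = (Wᵀ * (M * W)).det := by
    calc M.det = M.det * (W'ᵀ * W').det := by rw [hW'1, det_one, mul_one]
      _ = (W'ᵀ * (M * W')).det := by rw [det_mul, det_mul, det_mul]; ring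
      _ = (Wᵀ * (M * W)).det := by rw [h6, det_submatrix_equiv_self]
  rw [h5, hblock, det_fromBlocks_zero₂₁]
  congr 1
  rw [det_fin_one]
  simp [Matrix.smul_apply, Matrix.one_apply]

/-- for symmetric `J` with simple eigenvalue `λ`, eigenvector
`v`, and `V` with orthonormal columns orthogonal to `v`, the spectral norm of
`Z = V (Vᵀ(J−λI)V)⁻¹ Vᵀ` equals the reciprocal of the spectral gap of `λ`. -/
theorem spectral_norm_Z_eq_inv_spectral_gap
    {n : ℕ} (hn : 2 ≤ n)
    (J : Matrix (Fin n) (Fin n) ℝ) (hJ : Jᵀ = J) (lam : ℝ)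
    (hsimple : Polynomial.rootMultiplicity lam J.charpoly = 1)
    (v : Fin n → ℝ) (hv : v ≠ 0) (heig : J.mulVec v = lam • v)
    (V : Matrix (Fin n) (Fin (n - 1)) ℝ)
    (hVV : Vᵀ * V = 1) (hVv : Vᵀ.mulVec v = 0) :
    specNorm (V * (Vᵀ * (J - lam • 1) * V)⁻¹ * Vᵀ) =
      1 / sInf {d : ℝ | ∃ mu : ℝ,
        J.charpoly.IsRoot mu ∧ mu ≠ lam ∧ d = |mu - lam|} := by
  -- setup
  have hne : (Finset.univ : Finset (Fin (n - 1))).Nonempty := ⟨⟨0, by omega⟩, Finset.mem_univ _⟩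
  -- normalized eigenvector
  have hvv : 0 < v ⬝ᵥ v := by
    obtain ⟨i0, hi0⟩ := Function.ne_iff.mp hv
    exact Finset.sum_pos' (fun j _ => mul_self_nonneg _)
      ⟨i0, Finset.mem_univ _, mul_self_pos.mpr hi0⟩
  set u : Fin n → ℝ := (Real.sqrt (v ⬝ᵥ v))⁻¹ • v with hu
  have huu : u ⬝ᵥ u = 1 := by
    rw [hu, smul_dotProduct, dotProduct_smul, smul_eq_mul, smul_eq_mul, ← mul_assoc,
      ← mul_inv, Real.mul_self_sqrt hvv.le]
    exact inv_mul_cancel₀ (ne_of_gt hvv)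
  have hJu : J.mulVec u = lam • u := by
    rw [hu, mulVec_smul, heig, smul_comm]
  have hVu : Vᵀ.mulVec u = 0 := by
    rw [hu, mulVec_smul, hVv, smul_zero]
  -- the reduced matrix A
  set A : Matrix (Fin (n-1)) (Fin (n-1)) ℝ := Vᵀ * (J - lam • 1) * V with hAdef
  have hA2 : A = Vᵀ * J * V - lam • 1 := by
    rw [hAdef, Matrix.mul_sub, Matrix.sub_mul, Matrix.mul_smul, Matrix.mul_one,
      Matrix.smul_mul, hVV]
  have hAH : A.IsHermitian := by
    have ht : Aᴴ = Aᵀ := by ext i j; simp [conjTranspose_apply]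
    rw [Matrix.IsHermitian, ht, hAdef, transpose_mul, transpose_mul, transpose_transpose,
      transpose_sub, transpose_smul, transpose_one, hJ, Matrix.mul_assoc]
  set Q : Matrix (Fin (n-1)) (Fin (n-1)) ℝ := (hAH.eigenvectorUnitary : Matrix (Fin (n-1)) (Fin (n-1)) ℝ) with hQdef
  set α : Fin (n-1) → ℝ := hAH.eigenvalues with hαdef
  have hspec : A = Q * diagonal α * Qᵀ := my_spectral hAH
  have hQ1 : Qᵀ * Q = 1 := my_unitary1 hAH
  have hQ2 : Q * Qᵀ = 1 := my_unitary2 hAH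
  have hdetQ : Q.det * Qᵀ.det = 1 := by rw [← det_mul, hQ2, det_one]
  have hconj : ∀ X : Matrix (Fin (n-1)) (Fin (n-1)) ℝ, (Q * X * Qᵀ).det = X.det := by
    intro X
    rw [det_mul, det_mul]
    calc Q.det * X.det * Qᵀ.det = X.det * (Q.det * Qᵀ.det) := by ring
      _ = X.det := by rw [hdetQ, mul_one]
  -- eigenvalue product formula for A's charpoly
  have key : ∀ c : ℝ, A.charpoly.eval c = ∏ i, (c - α i) := by
    intro c
    rw [my_charpoly_eval]
    have h1 : c • (1 : Matrix (Fin (n-1)) (Fin (n-1)) ℝ) - A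
        = Q * (c • 1 - diagonal α) * Qᵀ := by
      rw [Matrix.mul_sub, Matrix.sub_mul, Matrix.mul_smul, Matrix.mul_one, Matrix.smul_mul,
        hQ2, ← hspec]
    rw [h1, hconj, smul_one_eq_diagonal, diagonal_sub, det_diagonal]
  -- charpoly factorization of J
  have key2 : ∀ t : ℝ, J.charpoly.eval t = (t - lam) * ∏ i, ((t - lam) - α i) := by
    intro t
    rw [my_charpoly_eval, key_det hn J hJ lam u huu hJu V hVV hVu t, ← hA2,
      ← my_charpoly_eval, key]
  -- all eigenvalues of A are nonzero
  have hα0 : ∀ i, α i ≠ 0 := by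
    have hp0 : J.charpoly ≠ 0 := (Matrix.charpoly_monic J).ne_zero
    set q : Polynomial ℝ := A.charpoly.comp (Polynomial.X - Polynomial.C lam) with hqdef
    have hq : J.charpoly = (Polynomial.X - Polynomial.C lam) * q := by
      apply Polynomial.funext
      intro r
      rw [Polynomial.eval_mul, Polynomial.eval_sub, Polynomial.eval_X, Polynomial.eval_C,
        hqdef, Polynomial.eval_comp, Polynomial.eval_sub, Polynomial.eval_X, Polynomial.eval_C,
        key2 r, key]
    have hq0 : q ≠ 0 := right_ne_zero_of_mul (hq ▸ hp0)
    have hrm : Polynomial.rootMultiplicity lam J.charpoly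
        = 1 + Polynomial.rootMultiplicity lam q := by
      rw [hq, Polynomial.rootMultiplicity_mul (hq ▸ hp0),
        Polynomial.rootMultiplicity_X_sub_C_self]
    have hrmq : Polynomial.rootMultiplicity lam q = 0 := by omega
    have hqlam : q.eval lam ≠ 0 := by
      intro h
      exact hq0 (Polynomial.rootMultiplicity_eq_zero_iff.mp hrmq h)
    have hql : q.eval lam = ∏ i, (0 - α i) := by
      rw [hqdef, Polynomial.eval_comp, Polynomial.eval_sub, Polynomial.eval_X, Polynomial.eval_C,
        sub_self, key]
    rw [hql] at hqlam
    intro i hi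
    exact hqlam (Finset.prod_eq_zero (Finset.mem_univ i) (by rw [hi, sub_zero]))
  -- the inverse of A
  have hAinv : A⁻¹ = Q * diagonal (fun i => (α i)⁻¹) * Qᵀ := by
    apply inv_eq_right_inv
    have hc : ∀ X Y : Matrix (Fin (n-1)) (Fin (n-1)) ℝ,
        (Q * X * Qᵀ) * (Q * Y * Qᵀ) = Q * (X * Y) * Qᵀ := by
      intro X Y
      rw [Matrix.mul_assoc (Q * X) Qᵀ (Q * Y * Qᵀ), ← Matrix.mul_assoc Qᵀ (Q * Y) Qᵀ,
        ← Matrix.mul_assoc Qᵀ Q Y, hQ1, Matrix.one_mul, ← Matrix.mul_assoc (Q * X) Y Qᵀ,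
        Matrix.mul_assoc Q X Y]
    rw [hspec, hc, diagonal_mul_diagonal,
      show (fun i => α i * (α i)⁻¹) = fun _ : Fin (n-1) => (1:ℝ) from
        funext fun i => mul_inv_cancel₀ (hα0 i),
      diagonal_one, Matrix.mul_one, hQ2]
  -- rewrite Z
  have hB : (V * Q)ᵀ * (V * Q) = 1 := by
    rw [transpose_mul, Matrix.mul_assoc, ← Matrix.mul_assoc Vᵀ V Q, hVV, Matrix.one_mul, hQ1]
  have hZ : V * A⁻¹ * Vᵀ = (V * Q) * diagonal (fun i => (α i)⁻¹) * (V * Q)ᵀ := by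
    rw [hAinv]
    simp only [transpose_mul, Matrix.mul_assoc]
  rw [hZ, specNorm_BDBt hne (V * Q) hB]
  -- identify the spectral gap set
  have hroot : ∀ mu : ℝ, mu ≠ lam → (J.charpoly.IsRoot mu ↔ ∃ i, mu - lam = α i) := by
    intro mu hmu
    rw [Polynomial.IsRoot, key2 mu, mul_eq_zero]
    constructor
    · rintro (h | h)
      · exact absurd (sub_eq_zero.mp h) hmu
      · obtain ⟨i, -, hi⟩ := Finset.prod_eq_zero_iff.mp h
        exact ⟨i, sub_eq_zero.mp hi⟩
    · rintro ⟨i, hi⟩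
      exact Or.inr (Finset.prod_eq_zero (Finset.mem_univ i) (by rw [← hi, sub_self]))
  obtain ⟨i₀, -, hi₀⟩ := Finset.exists_mem_eq_inf' hne fun i => |α i|
  have hm_pos : 0 < Finset.univ.inf' hne fun i => |α i| := by
    rw [hi₀]; exact abs_pos.mpr (hα0 i₀)
  have hinf : sInf {d : ℝ | ∃ mu : ℝ, J.charpoly.IsRoot mu ∧ mu ≠ lam ∧ d = |mu - lam|}
      = Finset.univ.inf' hne fun i => |α i| := by
    apply IsLeast.csInf_eq
    constructor
    · refine ⟨lam + α i₀, ?_, ?_, ?_⟩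
      · refine (hroot _ ?_).mpr ⟨i₀, by ring⟩
        intro h
        exact hα0 i₀ (by linarith [congrArg (fun x => x - lam) h])
      · intro h
        exact hα0 i₀ (by linarith [congrArg (fun x => x - lam) h])
      · rw [hi₀]; congr 1; ring
    · rintro d ⟨mu, hr, hmu, rfl⟩
      obtain ⟨i, hi⟩ := (hroot mu hmu).mp hr
      rw [hi]
      exact Finset.inf'_le _ (Finset.mem_univ i)
  rw [hinf, one_div]
  -- final sup/inf duality
  apply le_antisymm
  · apply Finset.sup'_le
    intro i _
    rw [abs_inv]
    have h1 : (Finset.univ.inf' hne fun j => |α j|) ≤ |α i| :=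
      Finset.inf'_le _ (Finset.mem_univ i)
    exact inv_anti₀ hm_pos h1
  · have h2 : ((Finset.univ.inf' hne fun j => |α j|))⁻¹ = |(α i₀)⁻¹| := by
      rw [hi₀, abs_inv]
    rw [h2]
    exact Finset.le_sup' (fun i => |(α i)⁻¹|) (Finset.mem_univ i₀)
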